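/- 𝔸″ is dense in 𝔸′: for every condition (u,φ) ∈ 𝔸′ there exists a condition (v,ψ) ∈ 𝔸″ with (v,ψ) ≤ (u,φ). -/

import Mathlib

open MeasureTheory

noncomputable section

/-- The binary-digit map sending `r ∈ [0,1)` to its sequence of binary digits,
so `binDigits r n` is the `n`-th binary digit of `r`. -/
def binDigits (r : ℝ) : ℕ → Bool := fun n => decide (⌊r * 2 ^ (n + 1)⌋ % 2 = 1)

/-- The uniform product ("coin-flipping") probability measure `μ` on Cantor space `2^ω`,
realized as the pushforward of Lebesgue measure on `[0,1)` under the binary-digit map. -/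
def μC : Measure (ℕ → Bool) := (volume.restrict (Set.Ico (0 : ℝ) 1)).map binDigits

/-- The basic clopen cylinder `[σ]` determined by a finite binary string `σ`. -/
def cyl (σ : List Bool) : Set (ℕ → Bool) :=
  {f | ∀ i : ℕ, ∀ h : i < σ.length, f i = σ.get ⟨i, h⟩}

/-- Property (*): for every binary string `σ` of length `i` not in `φ i`, the union of the
cylinders determined by proper extensions of `σ` appearing in some `φ j`, `j > i`,
has measure `< 2^{-i}`. -/
def StarProperty (φ : ℕ → Set (List Bool)) : Prop :=
  ∀ i : ℕ, ∀ σ : List Bool, σ.length = i → σ ∉ φ i →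
    μC (⋃ τ ∈ {τ : List Bool | σ <+: τ ∧ σ ≠ τ ∧ ∃ j, i < j ∧ τ ∈ φ j}, cyl τ)
      < (1 / 2 : ENNReal) ^ i

/-- A condition `(u, φ)` of the partial order `𝔸′`: `φ` assigns to each `i` a set of binary
strings of length `i`, satisfies (*), the union of all the corresponding cylinders has measure
`< 1/2`, and `u = φ↾n` is a finite initial segment of `φ` (represented by its domain `n`). -/
structure APrime where
  /-- the domain of the finite initial segment `u` (so `u = φ↾n`) -/
  n : ℕ
  /-- the function `φ` -/
  φ : ℕ → Set (List Bool)
  hlen : ∀ i : ℕ, ∀ σ ∈ φ i, σ.length = i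
  hstar : StarProperty φ
  hmeas : μC (⋃ i, ⋃ σ ∈ φ i, cyl σ) < 1 / 2

/-- The order of `𝔸′`: `(u,φ) ≤ (v,ψ)` iff `u ⊇ v` and every string in some `ψ i` extends a
string in some `φ j` with `j ≤ i`. -/
def APrimeLe (p q : APrime) : Prop :=
  q.n ≤ p.n ∧ (∀ i < q.n, p.φ i = q.φ i) ∧
    ∀ i : ℕ, ∀ σ ∈ q.φ i, ∃ j ≤ i, ∃ τ ∈ p.φ j, τ <+: σ

/-- Membership in the suborder `𝔸″ ⊆ 𝔸′`.  (The inequalities `μ > 1/2 - 2^{-m}` and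
`μ ≤ 1/2 - 2^{-m}` are stated additively as `μ + 2^{-m} > 1/2`, resp. `≤`, to express
real-number subtraction faithfully in `ℝ≥0∞`.) -/
def InAPP (p : APrime) : Prop :=
  ∃ m : ℕ,
    1 / 2 < μC (⋃ i < p.n, ⋃ σ ∈ p.φ i, cyl σ) + (1 / 2 : ENNReal) ^ m ∧
    μC (⋃ i < p.n - 1, ⋃ σ ∈ p.φ i, cyl σ) + (1 / 2 : ENNReal) ^ m ≤ 1 / 2 ∧
    μC (⋃ i, ⋃ _ : p.n ≤ i, ⋃ σ ∈ p.φ i, cyl σ) < (1 / 2 : ENNReal) ^ (m + 7)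

open scoped ENNReal Classical

lemma mem_cyl {σ : List Bool} {f : ℕ → Bool} :
    f ∈ cyl σ ↔ ∀ i : ℕ, ∀ h : i < σ.length, f i = σ[i] := Iff.rfl

lemma measurable_binDigits : Measurable binDigits := by
  apply measurable_pi_lambda
  intro n
  exact (measurable_from_top (f := fun z : ℤ => decide (z % 2 = 1))).comp
    ((measurable_id.mul_const _).floor)

lemma measurableSet_cyl (σ : List Bool) : MeasurableSet (cyl σ) := by
  have : cyl σ = ⋂ (i : Fin σ.length), {f : ℕ → Bool | f i = σ[(i : ℕ)]} := by
    ext f; simp [mem_cyl, Set.mem_iInter]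
    constructor
    · intro h i; exact h i i.2
    · intro h i hi; exact h ⟨i, hi⟩
  rw [this]
  exact MeasurableSet.iInter fun i =>
    (measurable_pi_apply (i : ℕ)) (MeasurableSet.singleton _)

def natVal (l : List Bool) : ℕ := l.foldl (fun a b => 2 * a + b.toNat) 0

lemma natVal_concat (σ : List Bool) (b : Bool) :
    natVal (σ ++ [b]) = 2 * natVal σ + b.toNat := by
  simp [natVal, List.foldl_append]

lemma natVal_lt (σ : List Bool) : natVal σ < 2 ^ σ.length := by
  induction σ using List.reverseRecOn with
  | nil => simp [natVal]
  | append_singleton σ b ih =>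
      rw [natVal_concat]
      have : b.toNat ≤ 1 := Bool.toNat_le b
      simp only [List.length_append, List.length_singleton, pow_succ]
      omega

lemma cyl_concat (σ : List Bool) (b : Bool) :
    cyl (σ ++ [b]) = cyl σ ∩ {f | f σ.length = b} := by
  ext f
  simp only [mem_cyl, Set.mem_inter_iff, Set.mem_setOf_eq, List.length_append,
    List.length_singleton]
  constructor
  · intro h
    refine ⟨fun i hi => ?_, ?_⟩
    · have := h i (by omega)
      rwa [List.getElem_append_left hi] at this
    · have := h σ.length (by omega)
      simpa using this
  · rintro ⟨h1, h2⟩ i hi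
    rcases lt_or_ge i σ.length with hlt | hge
    · rw [List.getElem_append_left hlt]; exact h1 i hlt
    · have : i = σ.length := by omega
      subst this
      simp [List.getElem_append_right (le_refl σ.length)]; exact h2

lemma digit_step (n k : ℕ) (b : Bool) (r : ℝ)
    (h1 : (2*k:ℝ) ≤ r * 2^(n+1)) (h2 : r * 2^(n+1) < 2*k+2) :
    (decide (⌊r * 2 ^ (n + 1)⌋ % 2 = 1) = b) ↔
      ((2*k+b.toNat : ℝ) ≤ r * 2^(n+1) ∧ r * 2^(n+1) < 2*k+b.toNat+1) := by
  set x := r * 2^(n+1) with hx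
  have l1 : (2*(k:ℤ)) ≤ ⌊x⌋ := Int.le_floor.mpr (by push_cast; linarith)
  have l2 : ⌊x⌋ < 2*(k:ℤ)+2 := Int.floor_lt.mpr (by push_cast; linarith)
  have hfl : ⌊x⌋ = 2*(k:ℤ) ∨ ⌊x⌋ = 2*(k:ℤ)+1 := by omega
  cases b with
  | false =>
      simp only [decide_eq_false_iff_not, Bool.toNat_false, Nat.cast_zero, add_zero]
      constructor
      · intro h
        have hf : ⌊x⌋ = 2*(k:ℤ) := by omega
        refine ⟨by simpa using h1, ?_⟩
        have := Int.lt_floor_add_one x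
        rw [hf] at this; push_cast at this ⊢; linarith
      · rintro ⟨-, hlt⟩ hmod
        have hf : ⌊x⌋ = 2*(k:ℤ)+1 := by omega
        have : ((2*(k:ℤ)+1 : ℤ) : ℝ) ≤ x := hf ▸ Int.floor_le x
        push_cast at this; linarith
  | true =>
      simp only [decide_eq_true_eq, Bool.toNat_true, Nat.cast_one]
      constructor
      · intro hmod
        have hf : ⌊x⌋ = 2*(k:ℤ)+1 := by omega
        have := hf ▸ Int.floor_le x
        push_cast at this
        refine ⟨by linarith, by push_cast; linarith⟩
      · rintro ⟨hge, -⟩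
        have hf : ⌊x⌋ = 2*(k:ℤ)+1 := by
          rcases hfl with hf | hf
          · exfalso
            have := Int.lt_floor_add_one x
            rw [hf] at this; push_cast at this; linarith
          · exact hf
        omega

lemma bd_mem (σ : List Bool) : ∀ r : ℝ, 0 ≤ r → r < 1 →
    (binDigits r ∈ cyl σ ↔
      ((natVal σ:ℝ)/2^σ.length ≤ r ∧ r < ((natVal σ:ℝ)+1)/2^σ.length)) := by
  induction σ using List.reverseRecOn with
  | nil =>
      intro r h0 h1
      simp [mem_cyl, natVal]
      exact ⟨h0, h1⟩
  | append_singleton σ b ih =>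
      intro r h0 h1
      have hn : (0:ℝ) < 2 ^ σ.length := by positivity
      have hn1 : (0:ℝ) < 2 ^ (σ.length+1) := by positivity
      rw [cyl_concat]
      simp only [Set.mem_inter_iff, Set.mem_setOf_eq, natVal_concat,
        List.length_append, List.length_singleton]
      rw [ih r h0 h1]
      push_cast
      have key : ((natVal σ:ℝ)/2^σ.length ≤ r ∧ r < ((natVal σ:ℝ)+1)/2^σ.length) →
          ((binDigits r σ.length = b) ↔
            ((2*(natVal σ)+b.toNat : ℝ)/2^(σ.length+1) ≤ r ∧
              r < ((2*(natVal σ):ℝ)+b.toNat+1)/2^(σ.length+1))) := by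
        rintro ⟨ha, hb⟩
        have h1' : (2*(natVal σ):ℝ) ≤ r * 2^(σ.length+1) := by
          rw [div_le_iff₀ hn] at ha
          calc (2*(natVal σ):ℝ) = (natVal σ) * 2 := by ring
          _ ≤ r * 2^σ.length * 2 := by linarith
          _ = r * 2^(σ.length+1) := by ring
        have h2' : r * 2^(σ.length+1) < 2*(natVal σ)+2 := by
          rw [lt_div_iff₀ hn] at hb
          calc r * 2^(σ.length+1) = r * 2^σ.length * 2 := by ring
          _ < ((natVal σ:ℝ)+1) * 2 := by linarith
          _ = 2*(natVal σ)+2 := by ring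
        have := digit_step σ.length (natVal σ) b r h1' h2'
        unfold binDigits
        rw [this]
        constructor
        · rintro ⟨u, v⟩
          exact ⟨(div_le_iff₀ hn1).mpr (by linarith), (lt_div_iff₀ hn1).mpr (by linarith)⟩
        · rintro ⟨u, v⟩
          exact ⟨by have := (div_le_iff₀ hn1).mp u; linarith,
                 by have := (lt_div_iff₀ hn1).mp v; linarith⟩
      constructor
      · rintro ⟨hbig, hd⟩
        exact ((key hbig).mp hd)
      · rintro ⟨hsm1, hsm2⟩
        have ht : (b.toNat : ℝ) ≤ 1 := by
          have := Bool.toNat_le b; exact_mod_cast this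
        have hbig : ((natVal σ:ℝ)/2^σ.length ≤ r ∧ r < ((natVal σ:ℝ)+1)/2^σ.length) := by
          constructor
          · calc (natVal σ:ℝ)/2^σ.length = (2*(natVal σ):ℝ)/2^(σ.length+1) := by
                  field_simp; ring
            _ ≤ ((2*(natVal σ):ℝ)+b.toNat)/2^(σ.length+1) :=
                  (div_le_div_iff_of_pos_right hn1).mpr (le_add_of_nonneg_right (by positivity))
            _ ≤ r := by push_cast at hsm1 ⊢; linarith
          · calc r < ((2*(natVal σ):ℝ)+b.toNat+1)/2^(σ.length+1) := hsm2
            _ ≤ ((2*(natVal σ):ℝ)+2)/2^(σ.length+1) :=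
                  (div_le_div_iff_of_pos_right hn1).mpr (by linarith)
            _ = ((natVal σ:ℝ)+1)/2^σ.length := by field_simp; ring
        exact ⟨hbig, (key hbig).mpr ⟨hsm1, hsm2⟩⟩

lemma preimage_cyl (σ : List Bool) :
    binDigits ⁻¹' (cyl σ) ∩ Set.Ico 0 1 =
      Set.Ico ((natVal σ:ℝ)/2^σ.length) (((natVal σ:ℝ)+1)/2^σ.length) := by
  have hn : (0:ℝ) < 2 ^ σ.length := by positivity
  have hv : (natVal σ:ℝ) + 1 ≤ 2 ^ σ.length := by
    have := natVal_lt σ; exact_mod_cast Nat.succ_le_of_lt this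
  ext r
  simp only [Set.mem_inter_iff, Set.mem_preimage, Set.mem_Ico]
  constructor
  · rintro ⟨hc, h0, h1⟩
    exact (bd_mem σ r h0 h1).mp hc
  · rintro ⟨ha, hb⟩
    have h0 : 0 ≤ r := le_trans (by positivity) ha
    have h1 : r < 1 := lt_of_lt_of_le hb (by rw [div_le_one hn]; linarith)
    exact ⟨(bd_mem σ r h0 h1).mpr ⟨ha, hb⟩, h0, h1⟩

lemma μC_cyl (σ : List Bool) : μC (cyl σ) = (1/2 : ENNReal) ^ σ.length := by
  have hn : (0:ℝ) < 2 ^ σ.length := by positivity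
  rw [μC, Measure.map_apply measurable_binDigits (measurableSet_cyl σ),
    Measure.restrict_apply (measurable_binDigits (measurableSet_cyl σ)),
    preimage_cyl, Real.volume_Ico]
  have : ((natVal σ:ℝ)+1)/2^σ.length - (natVal σ:ℝ)/2^σ.length = (1/2)^σ.length := by
    field_simp
    rw [← mul_pow]; norm_num
  rw [this]
  rw [ENNReal.ofReal_pow (by norm_num)]
  norm_num
  rw [show ((1:ℝ)/2) = 2⁻¹ by norm_num, ENNReal.ofReal_inv_of_pos (by norm_num)]
  norm_num

instance : IsProbabilityMeasure μC := by
  constructor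
  have := μC_cyl []
  simp only [cyl, List.length_nil] at this
  have h2 : {f : ℕ → Bool | ∀ (i : ℕ), ∀ (h : i < 0), f i = [].get ⟨i, h⟩} = Set.univ := by
    ext f; simp
  rw [h2] at this
  simpa using this

lemma prefix_of_mem_cyl {σ τ : List Bool} {f : ℕ → Bool} (hσ : f ∈ cyl σ) (hτ : f ∈ cyl τ)
    (h : σ.length ≤ τ.length) : σ <+: τ := by
  rw [List.prefix_iff_eq_take]
  apply List.ext_getElem
  · simp [Nat.min_eq_left h]
  · intro i hi hi'
    rw [List.getElem_take]
    have e1 := hσ i hi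
    have e2 := hτ i (by omega : i < τ.length)
    simp only [List.get_eq_getElem] at e1 e2
    rw [← e1, ← e2]

lemma cyl_mono {σ τ : List Bool} (h : σ <+: τ) : cyl τ ⊆ cyl σ := by
  intro f hf i hi
  have hl : σ.length ≤ τ.length := h.length_le
  rw [hf i (by omega)]
  exact (h.getElem hi).symm

lemma cyl_disj {σ τ : List Bool} (hl : σ.length = τ.length) (hne : σ ≠ τ) :
    Disjoint (cyl σ) (cyl τ) := by
  rw [Set.disjoint_left]
  intro f hσ hτ
  exact hne ((prefix_of_mem_cyl hσ hτ (le_of_eq hl)).eq_of_length hl)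

def MinSet (p : APrime) : Set (List Bool) :=
  {σ | σ ∈ p.φ σ.length ∧ ∀ ρ, ρ <+: σ → ρ ≠ σ → ρ ∉ p.φ ρ.length}

lemma proper_prefix_length {ρ σ : List Bool} (h : ρ <+: σ) (hne : ρ ≠ σ) :
    ρ.length < σ.length :=
  lt_of_le_of_ne h.length_le (fun hl => hne (h.eq_of_length hl))

lemma exists_min_prefix_aux (p : APrime) :
    ∀ n (σ : List Bool), σ.length ≤ n → σ ∈ p.φ σ.length →
      ∃ ρ ∈ MinSet p, ρ <+: σ := by
  intro n
  induction n with
  | zero =>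
      intro σ hl hσ
      refine ⟨σ, ⟨hσ, ?_⟩, List.prefix_refl σ⟩
      intro ρ hρ hne
      exact absurd (proper_prefix_length hρ hne) (by omega)
  | succ n ih =>
      intro σ hl hσ
      by_cases hmin : ∀ ρ, ρ <+: σ → ρ ≠ σ → ρ ∉ p.φ ρ.length
      · exact ⟨σ, ⟨hσ, hmin⟩, List.prefix_refl σ⟩
      · push_neg at hmin
        obtain ⟨ρ, hpre, hne, hρ⟩ := hmin
        have hlt : ρ.length < σ.length := proper_prefix_length hpre hne
        obtain ⟨ρ', hρ', hpre'⟩ := ih ρ (by omega) hρ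
        exact ⟨ρ', hρ', hpre'.trans hpre⟩

lemma exists_min_prefix (p : APrime) {i : ℕ} {σ : List Bool} (hσ : σ ∈ p.φ i) :
    ∃ ρ ∈ MinSet p, ρ <+: σ := by
  have hl := p.hlen i σ hσ
  exact exists_min_prefix_aux p σ.length σ le_rfl (by rwa [hl])

lemma min_mem (p : APrime) {σ : List Bool} (h : σ ∈ MinSet p) : σ ∈ p.φ σ.length := h.1

lemma min_cyl_disj (p : APrime) {σ τ : List Bool} (hσ : σ ∈ MinSet p) (hτ : τ ∈ MinSet p)
    (hne : σ ≠ τ) : Disjoint (cyl σ) (cyl τ) := by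
  have key : ∀ σ τ : List Bool, σ ∈ MinSet p → τ ∈ MinSet p → σ ≠ τ →
      σ.length ≤ τ.length → Disjoint (cyl σ) (cyl τ) := by
    intro σ τ hσ hτ hne hl
    rw [Set.disjoint_left]
    intro f hfσ hfτ
    have hpre : σ <+: τ := prefix_of_mem_cyl hfσ hfτ hl
    exact hτ.2 σ hpre hne hσ.1
  rcases le_total σ.length τ.length with h | h
  · exact key σ τ hσ hτ hne h
  · exact (key τ σ hτ hσ (Ne.symm hne) h).symm

def Tail (p : APrime) (N : ℕ) : Set (ℕ → Bool) :=
  ⋃ σ ∈ {σ ∈ MinSet p | N ≤ σ.length}, cyl σ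

lemma measurableSet_Tail (p : APrime) (N : ℕ) : MeasurableSet (Tail p N) :=
  MeasurableSet.biUnion (Set.to_countable _) (fun σ _ => measurableSet_cyl σ)

lemma Tail_anti (p : APrime) : Antitone (Tail p) := by
  intro M N h
  apply Set.biUnion_subset_biUnion_left
  intro σ hσ
  exact ⟨hσ.1, le_trans h hσ.2⟩

lemma Tail_iInter (p : APrime) : ⋂ N, Tail p N = ∅ := by
  ext f
  simp only [Set.mem_iInter, Set.mem_empty_iff_false, iff_false]
  intro hf
  obtain ⟨σ₀, hσ₀, hf₀⟩ := by
    have := hf 0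
    simpa only [Tail, Set.mem_iUnion, exists_prop, Set.mem_setOf_eq] using this
  obtain ⟨σ₁, hσ₁, hf₁⟩ := by
    have := hf (σ₀.length + 1)
    simpa only [Tail, Set.mem_iUnion, exists_prop, Set.mem_setOf_eq] using this
  have hne : σ₀ ≠ σ₁ := by
    intro h; rw [h] at hσ₁; omega
  exact Set.disjoint_left.mp (min_cyl_disj p hσ₀.1 hσ₁.1 hne) hf₀ hf₁

lemma Tail_tendsto (p : APrime) :
    Filter.Tendsto (fun N => μC (Tail p N)) Filter.atTop (nhds 0) := by
  have := MeasureTheory.tendsto_measure_iInter_atTop (μ := μC)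
    (fun N => (measurableSet_Tail p N).nullMeasurableSet) (Tail_anti p)
    ⟨0, measure_ne_top _ _⟩
  rw [Tail_iInter p] at this
  simpa [Function.comp_def] using this

lemma two_inv_cancel : (2:ℝ≥0∞) * (1/2) = 1 := by
  rw [one_div]; exact ENNReal.mul_inv_cancel (by norm_num) (by norm_num)

lemma half_pow_ne_top (k : ℕ) : (1/2:ℝ≥0∞)^k ≠ ⊤ := by
  apply ENNReal.pow_ne_top; norm_num

lemma half_pow_ne_zero (k : ℕ) : (1/2:ℝ≥0∞)^k ≠ 0 := by
  apply pow_ne_zero; norm_num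

lemma two_mul_half_succ (k : ℕ) : (2:ℝ≥0∞) * (1/2)^(k+1) = (1/2)^k := by
  rw [pow_succ, ← mul_assoc, mul_comm (2:ℝ≥0∞) _, mul_assoc, two_inv_cancel, mul_one]

lemma half_pow_anti {m k : ℕ} (h : m ≤ k) : (1/2:ℝ≥0∞)^k ≤ (1/2)^m :=
  pow_le_pow_of_le_one (by norm_num) (by norm_num) h

def covU (p : APrime) (L : ℕ) : Set (ℕ → Bool) := ⋃ i < L+1, ⋃ σ ∈ p.φ i, cyl σ

lemma measurableSet_covU (p : APrime) (L : ℕ) : MeasurableSet (covU p L) := by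
  apply MeasurableSet.biUnion (Set.to_countable _)
  intro i _
  exact MeasurableSet.biUnion (Set.to_countable _) (fun σ _ => measurableSet_cyl σ)

lemma fresh_disj_cov (p : APrime) (L : ℕ) {e : List Bool} (hlen : e.length = L)
    (hfresh : ∀ j ≤ L, ∀ τ ∈ p.φ j, ¬ τ <+: e) : Disjoint (covU p L) (cyl e) := by
  rw [Set.disjoint_left]
  intro f hf hfe
  simp only [covU, Set.mem_iUnion, exists_prop] at hf
  obtain ⟨i, hi, τ, hτ, hfτ⟩ := hf
  have hlτ : τ.length = i := p.hlen i τ hτ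
  have : τ <+: e := prefix_of_mem_cyl hfτ hfe (by omega)
  exact hfresh i (by omega) τ hτ this

lemma exists_good_E (p : APrime) (L K m : ℕ) (hLm : m + 8 ≤ L)
    (hQ : (K : ℝ≥0∞) * (1/2)^L + μC (covU p L) + (1/2)^m ≤ 1/2 + (1/2:ℝ≥0∞)^L)
    (hτ : μC (Tail p (L+1)) ≤ (1/2:ℝ≥0∞)^(m+8)) :
    ∃ E : Finset (List Bool), E.card = K ∧
      (∀ e ∈ E, e.length = L) ∧
      (∀ e ∈ E, ∀ j ≤ L, ∀ τ ∈ p.φ j, ¬ τ <+: e) ∧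
      (∀ e ∈ E, ∃ w : List Bool, w.length = L ∧ w ∉ E ∧
        (∀ j ≤ L, ∀ τ ∈ p.φ j, ¬ τ <+: w) ∧
        μC (Tail p (L+1) ∩ cyl w) ≤ (1/2:ℝ≥0∞)^(L+1) ∧
        w.take (L-1) = e.take (L-1)) := by
  have hL1 : 1 ≤ L := by omega
  set a := μC (covU p L) with ha
  set τT := μC (Tail p (L+1)) with hτT
  -- the universe of length-L strings
  set emb : (Fin L → Bool) → List Bool := fun f => List.ofFn f with hemb
  have hemblen : ∀ f, (emb f).length = L := fun f => List.length_ofFn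
  have hembinj : Function.Injective emb := fun f g h => List.ofFn_injective h
  set lst : Fin L := ⟨L-1, by omega⟩ with hlst
  set flp : (Fin L → Bool) → (Fin L → Bool) :=
    fun f => Function.update f lst (!(f lst)) with hflp
  have hflp_invol : Function.Involutive flp := by
    intro f
    funext i
    by_cases hi : i = lst
    · subst hi; simp [hflp, Function.update_self]
    · simp [hflp, Function.update_of_ne hi]
  have hflp_inj : Function.Injective flp := hflp_invol.injective
  have hflp_last : ∀ f, flp f lst = !(f lst) := by
    intro f; simp [hflp, Function.update_self]
  have hflp_ne : ∀ f i, i ≠ lst → flp f i = f i := by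
    intro f i hi; simp [hflp, Function.update_of_ne hi]
  -- cylinders of distinct strings are disjoint
  have hdisj : ∀ f g : Fin L → Bool, f ≠ g → Disjoint (cyl (emb f)) (cyl (emb g)) := by
    intro f g hne
    exact cyl_disj (by rw [hemblen, hemblen]) (fun h => hne (hembinj h))
  -- the bad sets
  set NFs : Finset (Fin L → Bool) :=
    Finset.univ.filter (fun f => ∃ j ≤ L, ∃ τ ∈ p.φ j, τ <+: emb f) with hNFs
  set BTs : Finset (Fin L → Bool) :=
    Finset.univ.filter (fun f => ¬ (μC (Tail p (L+1) ∩ cyl (emb f)) ≤ (1/2:ℝ≥0∞)^(L+1)))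
    with hBTs
  have hmemNF : ∀ f, f ∈ NFs ↔ ∃ j ≤ L, ∃ τ ∈ p.φ j, τ <+: emb f := by
    intro f; simp [hNFs]
  have hmemBT : ∀ f, f ∈ BTs ↔ ¬ (μC (Tail p (L+1) ∩ cyl (emb f)) ≤ (1/2:ℝ≥0∞)^(L+1)) := by
    intro f; simp [hBTs]
  -- measure bound for NFs
  have hNFcard : (NFs.card : ℝ≥0∞) * (1/2)^L ≤ a := by
    have hdis : (↑NFs : Set (Fin L → Bool)).PairwiseDisjoint (fun f => cyl (emb f)) := by
      intro f _ g _ hne; exact hdisj f g hne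
    have := measure_biUnion_finset (μ := μC) hdis (fun f _ => measurableSet_cyl _)
    have hsub : (⋃ f ∈ NFs, cyl (emb f)) ⊆ covU p L := by
      intro x hx
      simp only [Set.mem_iUnion, exists_prop] at hx
      obtain ⟨f, hf, hxf⟩ := hx
      obtain ⟨j, hj, τ, hτ, hpre⟩ := (hmemNF f).mp hf
      exact Set.mem_biUnion (show j < L+1 by omega) (Set.mem_biUnion hτ (cyl_mono hpre hxf))
    calc (NFs.card : ℝ≥0∞) * (1/2)^L
        = ∑ f ∈ NFs, μC (cyl (emb f)) := by
          rw [Finset.sum_congr rfl (fun f _ => by rw [μC_cyl, hemblen])]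
          rw [Finset.sum_const, nsmul_eq_mul]
      _ = μC (⋃ f ∈ NFs, cyl (emb f)) := this.symm
      _ ≤ a := measure_mono hsub
  -- measure bound for BTs
  have hBTcard : (BTs.card : ℝ≥0∞) * (1/2)^(L+1) ≤ τT := by
    have hdis : (↑BTs : Set (Fin L → Bool)).PairwiseDisjoint
        (fun f => Tail p (L+1) ∩ cyl (emb f)) := by
      intro f _ g _ hne
      exact Disjoint.mono inf_le_right inf_le_right (hdisj f g hne)
    have heq := measure_biUnion_finset (μ := μC) hdis
      (fun f _ => (measurableSet_Tail p (L+1)).inter (measurableSet_cyl _))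
    calc (BTs.card : ℝ≥0∞) * (1/2)^(L+1)
        = ∑ _f ∈ BTs, ((1/2:ℝ≥0∞))^(L+1) := by simp [mul_comm]
      _ ≤ ∑ f ∈ BTs, μC (Tail p (L+1) ∩ cyl (emb f)) := by
          apply Finset.sum_le_sum
          intro f hf
          exact le_of_lt (lt_of_not_ge ((hmemBT f).mp hf))
      _ = μC (⋃ f ∈ BTs, Tail p (L+1) ∩ cyl (emb f)) := heq.symm
      _ ≤ τT := by
          apply measure_mono
          intro x hx
          simp only [Set.mem_iUnion, exists_prop] at hx
          obtain ⟨f, _, hxf, _⟩ := hx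
          exact hxf
  -- the good set
  set G : Finset (Fin L → Bool) :=
    Finset.univ.filter (fun f => f ∉ NFs ∧ flp f ∉ NFs ∧ flp f ∉ BTs) with hG
  -- counting
  have hcount : 2*K + 2*NFs.card + BTs.card ≤ 2^L := by
    have hX : ((2*K + 2*NFs.card + BTs.card : ℕ) : ℝ≥0∞) * (1/2)^L ≤ 1 := by
      have e1 : ((2*K + 2*NFs.card + BTs.card : ℕ) : ℝ≥0∞) * (1/2)^L
          = 2*((K:ℝ≥0∞) * (1/2)^L) + 2*((NFs.card:ℝ≥0∞) * (1/2)^L)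
            + 2*((BTs.card:ℝ≥0∞) * (1/2)^(L+1)) := by
        push_cast
        rw [show ((1:ℝ≥0∞)/2)^L = 2*(1/2)^(L+1) from (two_mul_half_succ L).symm]
        ring
      have e2 : ((2*K + 2*NFs.card + BTs.card : ℕ) : ℝ≥0∞) * (1/2)^L + 2*(1/2:ℝ≥0∞)^m
          ≤ 1 + 2*(1/2:ℝ≥0∞)^L + 2*τT := by
        rw [e1]
        have : 2*((K:ℝ≥0∞) * (1/2)^L) + 2*((NFs.card:ℝ≥0∞) * (1/2)^L) + 2*(1/2:ℝ≥0∞)^m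
            ≤ 2 * ((1:ℝ≥0∞)/2 + (1/2)^L) := by
          rw [← mul_add, ← mul_add]
          apply mul_le_mul_right _ 2
          calc (K:ℝ≥0∞) * (1/2)^L + (NFs.card:ℝ≥0∞) * (1/2)^L + (1/2:ℝ≥0∞)^m
              ≤ (K:ℝ≥0∞) * (1/2)^L + a + (1/2:ℝ≥0∞)^m := by
                gcongr
          _ ≤ 1/2 + (1/2:ℝ≥0∞)^L := hQ
        calc 2*((K:ℝ≥0∞) * (1/2)^L) + 2*((NFs.card:ℝ≥0∞) * (1/2)^L)
              + 2*((BTs.card:ℝ≥0∞) * (1/2)^(L+1)) + 2*(1/2:ℝ≥0∞)^m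
            ≤ 2 * ((1:ℝ≥0∞)/2 + (1/2)^L) + 2*τT := by
              have h2 : 2*((BTs.card:ℝ≥0∞) * (1/2)^(L+1)) ≤ 2*τT :=
                mul_le_mul_right hBTcard 2
              calc 2*((K:ℝ≥0∞) * (1/2)^L) + 2*((NFs.card:ℝ≥0∞) * (1/2)^L)
                    + 2*((BTs.card:ℝ≥0∞) * (1/2)^(L+1)) + 2*(1/2:ℝ≥0∞)^m
                  = (2*((K:ℝ≥0∞) * (1/2)^L) + 2*((NFs.card:ℝ≥0∞) * (1/2)^L)
                    + 2*(1/2:ℝ≥0∞)^m) + 2*((BTs.card:ℝ≥0∞) * (1/2)^(L+1)) := by ring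
                _ ≤ 2 * ((1:ℝ≥0∞)/2 + (1/2)^L) + 2*τT := add_le_add this h2
          _ = 1 + 2*(1/2:ℝ≥0∞)^L + 2*τT := by
              rw [mul_add, two_inv_cancel]
      -- now cancel
      have e3 : 1 + 2*(1/2:ℝ≥0∞)^L + 2*τT ≤ 1 + 2*(1/2:ℝ≥0∞)^m := by
        have h1 : (2:ℝ≥0∞)*(1/2)^L ≤ (1/2:ℝ≥0∞)^m := by
          calc (2:ℝ≥0∞)*(1/2)^L ≤ 2*(1/2:ℝ≥0∞)^(m+8) :=
                mul_le_mul_right (half_pow_anti hLm) 2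
          _ = (1/2:ℝ≥0∞)^(m+7) := two_mul_half_succ (m+7)
          _ ≤ (1/2:ℝ≥0∞)^m := half_pow_anti (by omega)
        have h2 : (2:ℝ≥0∞)*τT ≤ (1/2:ℝ≥0∞)^m := by
          calc (2:ℝ≥0∞)*τT ≤ 2*(1/2:ℝ≥0∞)^(m+8) := mul_le_mul_right hτ 2
          _ = (1/2:ℝ≥0∞)^(m+7) := two_mul_half_succ (m+7)
          _ ≤ (1/2:ℝ≥0∞)^m := half_pow_anti (by omega)
        calc 1 + 2*(1/2:ℝ≥0∞)^L + 2*τT ≤ 1 + (1/2:ℝ≥0∞)^m + (1/2:ℝ≥0∞)^m :=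
              by exact add_le_add (add_le_add le_rfl h1) h2
        _ = 1 + 2*(1/2:ℝ≥0∞)^m := by ring
      have := le_trans e2 e3
      have hfin : (2:ℝ≥0∞)*(1/2)^m ≠ ⊤ :=
        ENNReal.mul_ne_top (by norm_num) (half_pow_ne_top m)
      exact (ENNReal.add_le_add_iff_right hfin).mp this
    -- convert to ℕ
    have h2L : ((2^L : ℕ) : ℝ≥0∞) * (1/2)^L = 1 := by
      push_cast
      rw [← mul_pow]
      rw [two_inv_cancel, one_pow]
    have hX' : ((2*K + 2*NFs.card + BTs.card : ℕ) : ℝ≥0∞) * (1/2)^L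
        ≤ ((2^L : ℕ) : ℝ≥0∞) * (1/2)^L := by rw [h2L]; exact hX
    have := (ENNReal.mul_le_mul_iff_left (half_pow_ne_zero L) (half_pow_ne_top L)).mp hX'
    exact_mod_cast this
  -- the good set has at least 2K elements
  have hGmem : ∀ f, f ∈ G ↔ (f ∉ NFs ∧ flp f ∉ NFs ∧ flp f ∉ BTs) := by
    intro f; simp [hG]
  have hGcard : 2*K ≤ G.card := by
    have hsub : Finset.univ.filter (fun f => ¬(f ∉ NFs ∧ flp f ∉ NFs ∧ flp f ∉ BTs))
        ⊆ NFs ∪ (NFs.image flp ∪ BTs.image flp) := by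
      intro f hf
      simp only [Finset.mem_filter, Finset.mem_univ, true_and] at hf
      push_neg at hf
      simp only [Finset.mem_union, Finset.mem_image]
      by_cases h1 : f ∈ NFs
      · exact Or.inl h1
      · by_cases h2 : flp f ∈ NFs
        · exact Or.inr (Or.inl ⟨flp f, h2, hflp_invol f⟩)
        · exact Or.inr (Or.inr ⟨flp f, hf h1 h2, hflp_invol f⟩)
    have hcard2 : (Finset.univ.filter (fun f => ¬(f ∉ NFs ∧ flp f ∉ NFs ∧ flp f ∉ BTs))).card
        ≤ NFs.card + NFs.card + BTs.card := by
      calc _ ≤ (NFs ∪ (NFs.image flp ∪ BTs.image flp)).card := Finset.card_le_card hsub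
      _ ≤ NFs.card + (NFs.image flp ∪ BTs.image flp).card := Finset.card_union_le _ _
      _ ≤ NFs.card + ((NFs.image flp).card + (BTs.image flp).card) := by
          exact add_le_add le_rfl (Finset.card_union_le _ _)
      _ = NFs.card + NFs.card + BTs.card := by
          rw [Finset.card_image_of_injective _ hflp_inj,
            Finset.card_image_of_injective _ hflp_inj, add_assoc]
    have htotal := Finset.card_filter_add_card_filter_not
      (s := Finset.univ) (p := fun f => f ∉ NFs ∧ flp f ∉ NFs ∧ flp f ∉ BTs)
    have huniv : (Finset.univ : Finset (Fin L → Bool)).card = 2^L := by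
      simp [Finset.card_univ]
    rw [← hG] at htotal
    omega
  -- extract a flip-free subset of size K
  set G1 : Finset (Fin L → Bool) :=
    G.filter (fun f => flp f ∉ G ∨ f lst = false) with hG1
  have hG1sub : G1 ⊆ G := Finset.filter_subset _ _
  have hG1mem : ∀ f, f ∈ G1 ↔ f ∈ G ∧ (flp f ∉ G ∨ f lst = false) := by
    intro f; simp [hG1]
  have hG1free : ∀ f ∈ G1, flp f ∉ G1 := by
    intro f hf hff
    obtain ⟨hfG, hfc⟩ := (hG1mem f).mp hf
    obtain ⟨hffG, hffc⟩ := (hG1mem (flp f)).mp hff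
    rcases hfc with h | h
    · exact h hffG
    · rcases hffc with h' | h'
      · rw [hflp_invol f] at h'; exact h' hfG
      · rw [hflp_last f, h] at h'; simp at h'
  have hG1card : K ≤ G1.card := by
    set ν : (Fin L → Bool) → (Fin L → Bool) :=
      fun f => if flp f ∉ G ∨ f lst = false then f else flp f with hν
    have himg : G.image ν ⊆ G1 := by
      intro g hg
      simp only [Finset.mem_image] at hg
      obtain ⟨f, hf, hgf⟩ := hg
      by_cases hc : flp f ∉ G ∨ f lst = false
      · have : ν f = f := by simp [hν, hc]
        rw [← hgf, this]
        exact (hG1mem f).mpr ⟨hf, hc⟩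
      · have hνf : ν f = flp f := by simp [hν, hc]
        push_neg at hc
        obtain ⟨hfpG, hlstt⟩ := hc
        rw [← hgf, hνf]
        apply (hG1mem (flp f)).mpr
        refine ⟨hfpG, Or.inr ?_⟩
        rw [hflp_last f]
        simp [hlstt]
    have hfib : ∀ b ∈ G.image ν, (G.filter (fun a => ν a = b)).card ≤ 2 := by
      intro b _
      have : G.filter (fun a => ν a = b) ⊆ insert b ({flp b} : Finset (Fin L → Bool)) := by
        intro a ha
        simp only [Finset.mem_filter] at ha
        have hab : ν a = b := ha.2
        have : a = b ∨ a = flp b := by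
          by_cases hc : flp a ∉ G ∨ a lst = false
          · left; rw [← hab]; simp [hν, hc]
          · right
            have : ν a = flp a := by simp [hν, hc]
            rw [this] at hab
            rw [← hab, hflp_invol a]
        simpa using this
      calc (G.filter (fun a => ν a = b)).card
            ≤ (insert b ({flp b} : Finset (Fin L → Bool))).card := Finset.card_le_card this
      _ ≤ 2 := by
          apply le_trans (Finset.card_insert_le _ _)
          simp
    have := Finset.card_le_mul_card_image G 2 hfib
    have himgcard : (G.image ν).card ≤ G1.card := Finset.card_le_card himg
    omega
  obtain ⟨E'', hE''sub, hE''card⟩ := Finset.exists_subset_card_eq hG1card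
  refine ⟨E''.image emb, ?_, ?_, ?_, ?_⟩
  · rw [Finset.card_image_of_injective _ hembinj, hE''card]
  · intro e he
    simp only [Finset.mem_image] at he
    obtain ⟨f, _, rfl⟩ := he
    exact hemblen f
  · intro e he j hj τ hτ hpre
    simp only [Finset.mem_image] at he
    obtain ⟨f, hf, rfl⟩ := he
    have hfG : f ∈ G := hG1sub (hE''sub hf)
    have := ((hGmem f).mp hfG).1
    rw [hmemNF] at this
    exact this ⟨j, hj, τ, hτ, hpre⟩
  · intro e he
    simp only [Finset.mem_image] at he
    obtain ⟨f, hf, rfl⟩ := he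
    have hfG1 : f ∈ G1 := hE''sub hf
    have hfG : f ∈ G := hG1sub hfG1
    obtain ⟨-, hfpNF, hfpBT⟩ := (hGmem f).mp hfG
    refine ⟨emb (flp f), hemblen _, ?_, ?_, ?_, ?_⟩
    · -- flp f not in E
      intro hmem
      simp only [Finset.mem_image] at hmem
      obtain ⟨g, hg, hge⟩ := hmem
      have : g = flp f := hembinj hge
      subst this
      exact hG1free f hfG1 (hE''sub hg)
    · -- fresh
      intro j hj τ hτ hpre
      rw [hmemNF] at hfpNF
      exact hfpNF ⟨j, hj, τ, hτ, hpre⟩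
    · -- tail small
      rw [hmemBT] at hfpBT
      exact not_not.mp (by simpa using hfpBT)
    · -- agreement on first L-1 coordinates
      apply List.ext_getElem
      · simp [hemblen]
      · intro i hi hi'
        have hiL : i < L - 1 := by
          simp only [List.length_take, hemblen] at hi
          omega
        rw [List.getElem_take, List.getElem_take]
        have h1 : (emb (flp f))[i]'(by rw [hemblen]; omega) = flp f ⟨i, by omega⟩ := by
          simp [hemb, List.getElem_ofFn]
        have h2 : (emb f)[i]'(by rw [hemblen]; omega) = f ⟨i, by omega⟩ := by
          simp [hemb, List.getElem_ofFn]
        rw [h1, h2]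
        apply hflp_ne
        intro hcon
        rw [hlst] at hcon
        have := congrArg Fin.val hcon
        simp at this
        omega

lemma half_pow_lt {m k : ℕ} (h : m < k) : (1/2:ℝ≥0∞)^k < (1/2)^m := by
  have h1 : (1/2:ℝ≥0∞)^k ≤ (1/2)^(m+1) := half_pow_anti (by omega)
  apply lt_of_le_of_lt h1
  rw [pow_succ]
  have := ENNReal.half_lt_self (half_pow_ne_zero m) (half_pow_ne_top m)
  rwa [ENNReal.div_eq_inv_mul, mul_comm, ← one_div] at this

lemma half_pow_pos (k : ℕ) : (0:ℝ≥0∞) < (1/2)^k :=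
  pos_iff_ne_zero.mpr (half_pow_ne_zero k)

/-- `𝔸″` is dense in `𝔸′`: every condition of `𝔸′` has an extension lying in `𝔸″`. -/
theorem APP_dense_in_APrime (p : APrime) :
    ∃ q : APrime, InAPP q ∧ APrimeLe q p := by
  classical
  set t := μC (⋃ i, ⋃ σ ∈ p.φ i, cyl σ) with htdef
  have ht : t < 1/2 := p.hmeas
  -- choose m
  obtain ⟨m, hm⟩ : ∃ m : ℕ, t + (1/2:ℝ≥0∞)^m ≤ 1/2 := by
    have hpos : (0:ℝ≥0∞) < 1/2 - t := tsub_pos_iff_lt.mpr ht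
    obtain ⟨m, hm'⟩ := ENNReal.exists_inv_two_pow_lt (ne_of_gt hpos)
    refine ⟨m, ?_⟩
    have h1 : (1/2:ℝ≥0∞)^m ≤ 1/2 - t := by
      calc (1/2:ℝ≥0∞)^m = 2⁻¹^m := by rw [one_div]
      _ ≤ 1/2 - t := le_of_lt hm'
    calc t + (1/2:ℝ≥0∞)^m ≤ t + (1/2 - t) := add_le_add le_rfl h1
    _ = 1/2 := add_tsub_cancel_of_le (le_of_lt ht)
  -- choose L
  obtain ⟨L, hLm, hLn, hτ⟩ : ∃ L : ℕ, m + 8 ≤ L ∧ p.n ≤ L ∧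
      μC (Tail p (L+1)) ≤ (1/2:ℝ≥0∞)^(m+8) := by
    have hev : ∀ᶠ N in Filter.atTop, μC (Tail p N) < (1/2:ℝ≥0∞)^(m+8) :=
      (Tail_tendsto p).eventually_lt_const (half_pow_pos (m+8))
    obtain ⟨N₀, hN₀⟩ := Filter.eventually_atTop.mp hev
    refine ⟨max (max (m+8) p.n) N₀, by omega, by omega, ?_⟩
    exact le_of_lt (hN₀ _ (by omega))
  set a := μC (covU p L) with hadef
  have hat : a ≤ t := by
    apply measure_mono
    intro x hx
    simp only [covU, Set.mem_iUnion, exists_prop] at hx ⊢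
    obtain ⟨i, _, σ, hσ, hxσ⟩ := hx
    exact ⟨i, σ, hσ, hxσ⟩
  have htaT : t ≤ a + μC (Tail p (L+1)) := by
    have hsub : (⋃ i, ⋃ σ ∈ p.φ i, cyl σ) ⊆ covU p L ∪ Tail p (L+1) := by
      intro x hx
      simp only [Set.mem_iUnion, exists_prop] at hx
      obtain ⟨i, σ, hσ, hxσ⟩ := hx
      obtain ⟨ρ, hρmin, hρpre⟩ := exists_min_prefix p hσ
      have hxρ : x ∈ cyl ρ := cyl_mono hρpre hxσ
      by_cases hρL : ρ.length < L + 1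
      · left
        exact Set.mem_biUnion hρL (Set.mem_biUnion (min_mem p hρmin) hxρ)
      · right
        exact Set.mem_biUnion (Set.mem_sep hρmin (by omega)) hxρ
    exact le_trans (measure_mono hsub) (measure_union_le _ _)
  -- choose K
  have hPex : ∃ K : ℕ, 1/2 < a + (K:ℝ≥0∞)*(1/2)^L + (1/2:ℝ≥0∞)^m := by
    refine ⟨2^L, ?_⟩
    have h2L : ((2^L : ℕ) : ℝ≥0∞) * (1/2)^L = 1 := by
      push_cast; rw [← mul_pow, two_inv_cancel, one_pow]
    rw [h2L]
    calc (1:ℝ≥0∞)/2 < 1 := by norm_num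
    _ ≤ a + 1 + (1/2:ℝ≥0∞)^m := by
        calc (1:ℝ≥0∞) ≤ a + 1 := le_add_self
        _ ≤ a + 1 + (1/2:ℝ≥0∞)^m := le_self_add
  set K := Nat.find hPex with hKdef
  have hPK : 1/2 < a + (K:ℝ≥0∞)*(1/2)^L + (1/2:ℝ≥0∞)^m := Nat.find_spec hPex
  have hQ : (K:ℝ≥0∞)*(1/2)^L + a + (1/2:ℝ≥0∞)^m ≤ 1/2 + (1/2:ℝ≥0∞)^L := by
    rcases Nat.eq_zero_or_pos K with h0 | hpos
    · rw [h0]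
      simp only [Nat.cast_zero, zero_mul, zero_add]
      calc a + (1/2:ℝ≥0∞)^m ≤ t + (1/2:ℝ≥0∞)^m := add_le_add hat le_rfl
      _ ≤ 1/2 := hm
      _ ≤ 1/2 + (1/2:ℝ≥0∞)^L := le_self_add
    · obtain ⟨K', hK'⟩ := Nat.exists_eq_succ_of_ne_zero (by omega : K ≠ 0)
      have hmin : ¬ (1/2 < a + (K':ℝ≥0∞)*(1/2)^L + (1/2:ℝ≥0∞)^m) := by
        have := Nat.find_min hPex (show K' < K by omega)
        exact this
      push_neg at hmin
      rw [hK']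
      push_cast
      calc ((K':ℝ≥0∞)+1)*(1/2)^L + a + (1/2:ℝ≥0∞)^m
          = (a + (K':ℝ≥0∞)*(1/2)^L + (1/2:ℝ≥0∞)^m) + (1/2)^L := by ring
      _ ≤ 1/2 + (1/2:ℝ≥0∞)^L := add_le_add hmin le_rfl
  obtain ⟨E, hEcard, hElen, hEfresh, hEhole⟩ :=
    exists_good_E p L K m hLm (by rw [← hadef]; exact hQ) hτ
  set EU := ⋃ e ∈ E, cyl e with hEUdef
  have hEUmeas : MeasurableSet EU :=
    MeasurableSet.biUnion (Set.to_countable _) (fun e _ => measurableSet_cyl e)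
  have hEUdisj : Disjoint (covU p L) EU := by
    rw [Set.disjoint_right]
    intro x hx
    simp only [hEUdef, Set.mem_iUnion, exists_prop] at hx
    obtain ⟨e, he, hxe⟩ := hx
    exact fun hcov => Set.disjoint_left.mp
      (fresh_disj_cov p L (hElen e he) (hEfresh e he)) hcov hxe
  have hEUμ : μC EU = (K:ℝ≥0∞) * (1/2)^L := by
    rw [hEUdef]
    have hdis : (↑E : Set (List Bool)).PairwiseDisjoint cyl := by
      intro e he f hf hne
      exact cyl_disj (by rw [hElen e he, hElen f hf]) hne
    rw [measure_biUnion_finset hdis (fun e _ => measurableSet_cyl e)]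
    rw [Finset.sum_congr rfl (fun e he => by rw [μC_cyl, hElen e he])]
    rw [Finset.sum_const, nsmul_eq_mul, hEcard]
  have hcovEU : μC (covU p L ∪ EU) = a + (K:ℝ≥0∞)*(1/2)^L := by
    rw [measure_union hEUdisj hEUmeas, ← hadef, hEUμ]
  -- define q's φ
  set qφ : ℕ → Set (List Bool) := fun i =>
    if i < L then p.φ i else if i = L then p.φ L ∪ (↑E : Set (List Bool))
    else {σ | σ ∈ MinSet p ∧ σ.length = i} with hqφdef
  have hq_lt : ∀ i, i < L → qφ i = p.φ i := fun i hi => by simp [hqφdef, hi]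
  have hq_eqL : qφ L = p.φ L ∪ (↑E : Set (List Bool)) := by simp [hqφdef]
  have hq_gt : ∀ i, L < i → qφ i = {σ | σ ∈ MinSet p ∧ σ.length = i} := fun i hi => by
    rw [hqφdef]
    simp only [if_neg (by omega : ¬ i < L), if_neg (by omega : ¬ i = L)]
  have hq_le : ∀ i, i ≤ L → p.φ i ⊆ qφ i := by
    intro i hi
    rcases lt_or_eq_of_le hi with h | h
    · rw [hq_lt i h]
    · subst h; rw [hq_eqL]; exact Set.subset_union_left
  have hlenq : ∀ i, ∀ σ ∈ qφ i, σ.length = i := by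
    intro i σ hσ
    rcases lt_trichotomy i L with h | h | h
    · rw [hq_lt i h] at hσ; exact p.hlen i σ hσ
    · subst h; rw [hq_eqL] at hσ
      rcases hσ with h | h
      · exact p.hlen _ σ h
      · exact hElen σ h
    · rw [hq_gt i h] at hσ; exact hσ.2
  -- set identities
  have hU1 : (⋃ i < L+1, ⋃ σ ∈ qφ i, cyl σ) = covU p L ∪ EU := by
    ext x
    simp only [covU, hEUdef, Set.mem_iUnion, Set.mem_union, exists_prop]
    constructor
    · rintro ⟨i, hi, σ, hσ, hx⟩
      by_cases hiL : i < L
      · left; exact ⟨i, hi, σ, by rwa [hq_lt i hiL] at hσ, hx⟩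
      · have hieq : i = L := by omega
        subst hieq
        rw [hq_eqL] at hσ
        rcases hσ with h | h
        · left; exact ⟨i, by omega, σ, h, hx⟩
        · right; exact ⟨σ, h, hx⟩
    · rintro (⟨i, hi, σ, hσ, hx⟩ | ⟨e, he, hx⟩)
      · exact ⟨i, hi, σ, hq_le i (by omega) hσ, hx⟩
      · exact ⟨L, by omega, e, by rw [hq_eqL]; exact Or.inr he, hx⟩
  have hU2 : (⋃ i < L, ⋃ σ ∈ qφ i, cyl σ) = (⋃ i < L, ⋃ σ ∈ p.φ i, cyl σ) := by
    apply Set.iUnion₂_congr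
    intro i hi
    rw [hq_lt i hi]
  have hU3 : (⋃ i, ⋃ (_ : L+1 ≤ i), ⋃ σ ∈ qφ i, cyl σ) ⊆ Tail p (L+1) := by
    intro x hx
    simp only [Set.mem_iUnion, exists_prop] at hx
    obtain ⟨i, hi, σ, hσ, hx⟩ := hx
    rw [hq_gt i (by omega)] at hσ
    exact Set.mem_biUnion (Set.mem_sep hσ.1 (by rw [hσ.2]; omega)) hx
  have htotq : (⋃ i, ⋃ σ ∈ qφ i, cyl σ) ⊆ (⋃ i, ⋃ σ ∈ p.φ i, cyl σ) ∪ EU := by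
    intro x hx
    simp only [hEUdef, Set.mem_iUnion, Set.mem_union, exists_prop] at hx ⊢
    obtain ⟨i, σ, hσ, hx⟩ := hx
    rcases lt_trichotomy i L with h | h | h
    · rw [hq_lt i h] at hσ; exact Or.inl ⟨i, σ, hσ, hx⟩
    · subst h
      rw [hq_eqL] at hσ
      rcases hσ with h | h
      · exact Or.inl ⟨i, σ, h, hx⟩
      · exact Or.inr ⟨σ, h, hx⟩
    · rw [hq_gt i h] at hσ
      exact Or.inl ⟨i, σ, by rw [← hσ.2]; exact min_mem p hσ.1, hx⟩
  -- measure of everything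
  have hmeasq : μC (⋃ i, ⋃ σ ∈ qφ i, cyl σ) < 1/2 := by
    have h1 : μC (⋃ i, ⋃ σ ∈ qφ i, cyl σ) ≤ t + (K:ℝ≥0∞)*(1/2)^L := by
      calc μC (⋃ i, ⋃ σ ∈ qφ i, cyl σ) ≤ μC ((⋃ i, ⋃ σ ∈ p.φ i, cyl σ) ∪ EU) :=
            measure_mono htotq
      _ ≤ t + μC EU := by rw [htdef]; exact measure_union_le _ _
      _ = t + (K:ℝ≥0∞)*(1/2)^L := by rw [hEUμ]
    have h2 : t + (K:ℝ≥0∞)*(1/2)^L + (1/2:ℝ≥0∞)^m < 1/2 + (1/2:ℝ≥0∞)^m := by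
      calc t + (K:ℝ≥0∞)*(1/2)^L + (1/2:ℝ≥0∞)^m
          ≤ (a + μC (Tail p (L+1))) + (K:ℝ≥0∞)*(1/2)^L + (1/2:ℝ≥0∞)^m := by
            exact add_le_add (add_le_add htaT le_rfl) le_rfl
      _ = ((K:ℝ≥0∞)*(1/2)^L + a + (1/2:ℝ≥0∞)^m) + μC (Tail p (L+1)) := by ring
      _ ≤ (1/2 + (1/2:ℝ≥0∞)^L) + (1/2:ℝ≥0∞)^(m+8) := add_le_add hQ hτ
      _ ≤ (1/2 + (1/2:ℝ≥0∞)^(m+8)) + (1/2:ℝ≥0∞)^(m+8) := by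
            exact add_le_add (add_le_add le_rfl (half_pow_anti hLm)) le_rfl
      _ = 1/2 + (1/2:ℝ≥0∞)^(m+7) := by
            rw [add_assoc, ← two_mul ((1/2:ℝ≥0∞)^(m+8)), two_mul_half_succ]
      _ < 1/2 + (1/2:ℝ≥0∞)^m := by
            exact ENNReal.add_lt_add_left (by norm_num) (half_pow_lt (by omega))
    have h3 : t + (K:ℝ≥0∞)*(1/2)^L < 1/2 :=
      (ENNReal.add_lt_add_iff_right (half_pow_ne_top m)).mp h2
    exact lt_of_le_of_lt h1 h3
  have hstarq : StarProperty qφ := by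
    intro i σ hslen hσ
    set Sq := {τ : List Bool | σ <+: τ ∧ σ ≠ τ ∧ ∃ j, i < j ∧ τ ∈ qφ j} with hSq
    have hXsubσ : (⋃ τ ∈ Sq, cyl τ) ⊆ cyl σ := by
      intro x hx
      simp only [Set.mem_iUnion, exists_prop, hSq, Set.mem_setOf_eq] at hx
      obtain ⟨τ, ⟨hpre, _, _⟩, hxτ⟩ := hx
      exact cyl_mono hpre hxτ
    have hviaP : σ ∉ p.φ i →
        Sq ⊆ {τ : List Bool | σ <+: τ ∧ σ ≠ τ ∧ ∃ j, i < j ∧ τ ∈ p.φ j} →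
        μC (⋃ τ ∈ Sq, cyl τ) < (1/2:ℝ≥0∞)^i := by
      intro h1 h2
      have := p.hstar i σ hslen h1
      calc μC (⋃ τ ∈ Sq, cyl τ)
          ≤ μC (⋃ τ ∈ {τ : List Bool | σ <+: τ ∧ σ ≠ τ ∧ ∃ j, i < j ∧ τ ∈ p.φ j}, cyl τ) :=
            measure_mono (Set.biUnion_subset_biUnion_left h2)
      _ < (1/2:ℝ≥0∞)^i := this
    rcases lt_trichotomy i L with hiL | hiL | hiL
    · -- i < L
      have hσp : σ ∉ p.φ i := by rwa [hq_lt i hiL] at hσ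
      by_cases hEx : ∃ e ∈ E, σ <+: e ∧ σ ≠ e
      · -- hole argument
        obtain ⟨e, heE, hepre, hene⟩ := hEx
        obtain ⟨w, hwlen, hwE, hwfresh, hwtail, hwtake⟩ := hEhole e heE
        have hprew : σ <+: w := by
          rw [List.prefix_iff_eq_take] at hepre ⊢
          have h1 : σ.length ≤ L - 1 := by omega
          have hkey : List.take σ.length e = List.take σ.length w := by
            calc List.take σ.length e = List.take (min σ.length (L-1)) e := by
                  rw [Nat.min_eq_left h1]
            _ = List.take σ.length (List.take (L-1) e) := List.take_take.symm
            _ = List.take σ.length (List.take (L-1) w) := by rw [hwtake]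
            _ = List.take (min σ.length (L-1)) w := List.take_take
            _ = List.take σ.length w := by rw [Nat.min_eq_left h1]
          conv_lhs => rw [hepre]
          rw [← hkey, ← hepre]
        set H := cyl w \ Tail p (L+1) with hH
        have hHmeas : MeasurableSet H :=
          (measurableSet_cyl w).diff (measurableSet_Tail p (L+1))
        have hHsub : H ⊆ cyl σ := Set.Subset.trans Set.diff_subset (cyl_mono hprew)
        have hdisjXH : Disjoint (⋃ τ ∈ Sq, cyl τ) H := by
          rw [Set.disjoint_left]
          intro x hx hxH
          simp only [Set.mem_iUnion, exists_prop, hSq, Set.mem_setOf_eq] at hx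
          obtain ⟨τ, ⟨hpre, hne, j, hj, hτj⟩, hxτ⟩ := hx
          have hfreshkill : ∀ j' ≤ L, τ ∈ p.φ j' → False := by
            intro j' hj' hτj'
            have hτlen : τ.length = j' := p.hlen j' τ hτj'
            have hcomp : τ <+: w := prefix_of_mem_cyl hxτ hxH.1 (by omega)
            exact hwfresh j' hj' τ hτj' hcomp
          rcases lt_trichotomy j L with hjL | hjL | hjL
          · rw [hq_lt j hjL] at hτj
            exact hfreshkill j (by omega) hτj
          · subst hjL
            rw [hq_eqL] at hτj
            rcases hτj with hτj | hτj
            · exact hfreshkill j le_rfl hτj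
            · have hτE : τ ∈ E := hτj
              have hτw : τ ≠ w := by
                intro hh; rw [hh] at hτE; exact hwE hτE
              exact Set.disjoint_left.mp
                (cyl_disj (by rw [hElen τ hτE, hwlen]) hτw) hxτ hxH.1
          · rw [hq_gt j hjL] at hτj
            exact hxH.2 (Set.mem_biUnion (Set.mem_sep hτj.1 (by rw [hτj.2]; omega)) hxτ)
        have hHlow : (1/2:ℝ≥0∞)^(L+1) ≤ μC H := by
          have hsplit : cyl w ⊆ H ∪ (Tail p (L+1) ∩ cyl w) := by
            intro x hx
            by_cases hT : x ∈ Tail p (L+1)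
            · exact Or.inr ⟨hT, hx⟩
            · exact Or.inl ⟨hx, hT⟩
          have h1 : (1/2:ℝ≥0∞)^L ≤ μC H + (1/2:ℝ≥0∞)^(L+1) := by
            calc (1/2:ℝ≥0∞)^L = μC (cyl w) := by rw [μC_cyl, hwlen]
            _ ≤ μC H + μC (Tail p (L+1) ∩ cyl w) :=
                le_trans (measure_mono hsplit) (measure_union_le _ _)
            _ ≤ μC H + (1/2:ℝ≥0∞)^(L+1) := add_le_add le_rfl hwtail
          have h2 : (1/2:ℝ≥0∞)^(L+1) + (1/2:ℝ≥0∞)^(L+1) = (1/2:ℝ≥0∞)^L := by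
            rw [← two_mul, two_mul_half_succ]
          rw [← h2] at h1
          exact (ENNReal.add_le_add_iff_right (half_pow_ne_top (L+1))).mp h1
        have hunion : μC (⋃ τ ∈ Sq, cyl τ) + μC H ≤ (1/2:ℝ≥0∞)^i := by
          rw [← measure_union hdisjXH hHmeas]
          calc μC ((⋃ τ ∈ Sq, cyl τ) ∪ H) ≤ μC (cyl σ) :=
                measure_mono (Set.union_subset hXsubσ hHsub)
          _ = (1/2:ℝ≥0∞)^i := by rw [μC_cyl, hslen]
        calc μC (⋃ τ ∈ Sq, cyl τ) < μC (⋃ τ ∈ Sq, cyl τ) + (1/2:ℝ≥0∞)^(L+1) :=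
              ENNReal.lt_add_right (measure_ne_top _ _) (half_pow_ne_zero (L+1))
        _ ≤ μC (⋃ τ ∈ Sq, cyl τ) + μC H := add_le_add le_rfl hHlow
        _ ≤ (1/2:ℝ≥0∞)^i := hunion
      · -- no element of E extends σ
        push_neg at hEx
        apply hviaP hσp
        intro τ hτ
        obtain ⟨hpre, hne, j, hj, hτj⟩ := hτ
        refine ⟨hpre, hne, j, hj, ?_⟩
        rcases lt_trichotomy j L with hjL | hjL | hjL
        · rwa [hq_lt j hjL] at hτj
        · subst hjL
          rw [hq_eqL] at hτj
          rcases hτj with hτj | hτj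
          · exact hτj
          · exact absurd (hEx τ hτj hpre) hne
        · rw [hq_gt j hjL] at hτj
          rw [← hτj.2]
          exact min_mem p hτj.1
    · -- i = L
      subst hiL
      have hσp : σ ∉ p.φ i := fun h => hσ (hq_le i le_rfl h)
      apply hviaP hσp
      intro τ hτ
      obtain ⟨hpre, hne, j, hj, hτj⟩ := hτ
      rw [hq_gt j (by omega)] at hτj
      refine ⟨hpre, hne, j, hj, ?_⟩
      rw [← hτj.2]
      exact min_mem p hτj.1
    · -- i > L
      by_cases hσp : σ ∈ p.φ i
      · -- the union is empty
        have hempty : Sq = ∅ := by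
          ext τ
          simp only [hSq, Set.mem_setOf_eq, Set.mem_empty_iff_false, iff_false, not_and]
          intro hpre hne
          rintro ⟨j, hj, hτj⟩
          rw [hq_gt j (by omega)] at hτj
          exact hτj.1.2 σ hpre hne (by rwa [hslen])
        rw [hempty]
        simp only [Set.mem_empty_iff_false, Set.iUnion_of_empty, Set.iUnion_empty]
        rw [measure_empty]
        exact half_pow_pos i
      · apply hviaP hσp
        intro τ hτ
        obtain ⟨hpre, hne, j, hj, hτj⟩ := hτ
        rw [hq_gt j (by omega)] at hτj
        refine ⟨hpre, hne, j, hj, ?_⟩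
        rw [← hτj.2]
        exact min_mem p hτj.1
  refine ⟨⟨L+1, qφ, hlenq, hstarq, hmeasq⟩, ⟨m, ?_, ?_, ?_⟩, ?_, ?_, ?_⟩
  · show 1/2 < μC (⋃ i < L+1, ⋃ σ ∈ qφ i, cyl σ) + (1/2:ℝ≥0∞)^m
    rw [hU1, hcovEU]
    exact hPK
  · show μC (⋃ i < (L+1)-1, ⋃ σ ∈ qφ i, cyl σ) + (1/2:ℝ≥0∞)^m ≤ 1/2
    simp only [Nat.add_sub_cancel]
    rw [hU2]
    have hsub : (⋃ i < L, ⋃ σ ∈ p.φ i, cyl σ) ⊆ (⋃ i, ⋃ σ ∈ p.φ i, cyl σ) := by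
      intro x hx
      simp only [Set.mem_iUnion, exists_prop] at hx ⊢
      obtain ⟨i, _, σ, hσ, hx⟩ := hx
      exact ⟨i, σ, hσ, hx⟩
    calc μC (⋃ i < L, ⋃ σ ∈ p.φ i, cyl σ) + (1/2:ℝ≥0∞)^m
        ≤ t + (1/2:ℝ≥0∞)^m := add_le_add (measure_mono hsub) le_rfl
    _ ≤ 1/2 := hm
  · show μC (⋃ i, ⋃ (_ : L+1 ≤ i), ⋃ σ ∈ qφ i, cyl σ) < (1/2:ℝ≥0∞)^(m+7)
    calc μC (⋃ i, ⋃ (_ : L+1 ≤ i), ⋃ σ ∈ qφ i, cyl σ) ≤ μC (Tail p (L+1)) :=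
          measure_mono hU3
    _ ≤ (1/2:ℝ≥0∞)^(m+8) := hτ
    _ < (1/2:ℝ≥0∞)^(m+7) := half_pow_lt (by omega)
  · show p.n ≤ L + 1
    omega
  · intro i hi
    show qφ i = p.φ i
    exact hq_lt i (by omega)
  · intro i σ hσ
    obtain ⟨ρ, hρmin, hρpre⟩ := exists_min_prefix p hσ
    refine ⟨ρ.length, ?_, ρ, ?_, hρpre⟩
    · have h1 : σ.length = i := p.hlen i σ hσ
      have h2 := hρpre.length_le
      omega
    · show ρ ∈ qφ ρ.length
      by_cases hρ : ρ.length ≤ L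
      · exact hq_le _ hρ (min_mem p hρmin)
      · rw [hq_gt _ (by omega)]
        exact ⟨hρmin, rfl⟩


end
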